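/- Let γ > 1 and consider a radial solution (ρ, u, p) of the steady radial Euler system (r²ρu)' = 0, ρuu' + p' = 0, ρuB' = 0 with ρ, u, p positive and C¹. Define the Mach number M := u/√(γp/ρ). If M < 1 on the interval, then ρ' = (2ρ/r)·M²/(1 − M²) > 0, i.e., the density of a radial subsonic flow in a divergent nozzle is strictly increasing in r. -/

import Mathlib

open Set

/-- For a positive `C¹` radial solution of the steady radial Euler system on `(t, r₁)`
which is subsonic (`M = u/√(γp/ρ) < 1`), the density satisfies
`ρ' = (2ρ/r)·M²/(1 − M²) > 0`; in particular the density of a radial subsonic flow in a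
divergent nozzle is strictly increasing in `r`. -/
theorem stmt_4 (γ : ℝ) (hγ : 1 < γ) (t r₁ : ℝ) (ht : 0 < t) (hr : t < r₁)
    (ρ u p ρ' u' p' : ℝ → ℝ)
    (hρ : ∀ r ∈ Ioo t r₁, HasDerivAt ρ (ρ' r) r)
    (hu : ∀ r ∈ Ioo t r₁, HasDerivAt u (u' r) r)
    (hp : ∀ r ∈ Ioo t r₁, HasDerivAt p (p' r) r)
    (hρpos : ∀ r ∈ Ioo t r₁, 0 < ρ r)
    (hupos : ∀ r ∈ Ioo t r₁, 0 < u r)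
    (hppos : ∀ r ∈ Ioo t r₁, 0 < p r)
    (hmass : ∀ r ∈ Ioo t r₁, deriv (fun s => s^2 * ρ s * u s) r = 0)
    (hmom : ∀ r ∈ Ioo t r₁, ρ r * u r * u' r + p' r = 0)
    (hber : ∀ r ∈ Ioo t r₁,
      ρ r * u r * deriv (fun s => (u s)^2/2 + γ * p s / ((γ-1) * ρ s)) r = 0)
    (hsub : ∀ r ∈ Ioo t r₁, u r / Real.sqrt (γ * p r / ρ r) < 1) :
    ∀ r ∈ Ioo t r₁,
      ρ' r = (2 * ρ r / r) *
        ((u r / Real.sqrt (γ * p r / ρ r))^2 / (1 - (u r / Real.sqrt (γ * p r / ρ r))^2)) ∧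
      0 < ρ' r := by
  intro r hrmem
  obtain ⟨hrt, hrr⟩ := hrmem
  have hrm : r ∈ Ioo t r₁ := ⟨hrt, hrr⟩
  have hrpos : 0 < r := ht.trans hrt
  have ha : 0 < ρ r := hρpos r hrm
  have hb : 0 < u r := hupos r hrm
  have hq : 0 < p r := hppos r hrm
  have hγ1 : (0:ℝ) < γ - 1 := by linarith
  have hγ0 : (0:ℝ) < γ := by linarith
  -- mass equation
  have hm : HasDerivAt (fun s => s^2 * ρ s * u s)
      ((2 * r * ρ r + r^2 * ρ' r) * u r + r^2 * ρ r * u' r) r := by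
    have h1 : HasDerivAt (fun s : ℝ => s^2 * ρ s) (2 * r * ρ r + r^2 * ρ' r) r := by
      have : HasDerivAt (fun s : ℝ => s^2 * ρ s) _ r := (hasDerivAt_pow 2 r).mul (hρ r hrm)
      convert this using 1
      ring
    exact h1.mul (hu r hrm)
  have e1 : (2 * r * ρ r + r^2 * ρ' r) * u r + r^2 * ρ r * u' r = 0 := by
    rw [← hm.deriv]; exact hmass r hrm
  -- momentum
  have e2 := hmom r hrm
  -- Bernoulli
  have hbd : HasDerivAt (fun s => (u s)^2/2 + γ * p s / ((γ-1) * ρ s))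
      (u r * u' r + (γ * p' r * ((γ-1) * ρ r) - γ * p r * ((γ-1) * ρ' r)) / ((γ-1) * ρ r)^2)
      r := by
    have h1 : HasDerivAt (fun s => (u s)^2/2) (u r * u' r) r := by
      have : HasDerivAt (fun s => (u s)^2/2) _ r := ((hu r hrm).pow 2).div_const 2
      convert this using 1
      ring
    have h2 : HasDerivAt (fun s => γ * p s / ((γ-1) * ρ s))
        ((γ * p' r * ((γ-1) * ρ r) - γ * p r * ((γ-1) * ρ' r)) / ((γ-1) * ρ r)^2) r := by
      exact HasDerivAt.div ((hp r hrm).const_mul γ) ((hρ r hrm).const_mul (γ-1))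
        (by positivity)
    exact h1.add h2
  have e3 : u r * u' r + (γ * p' r * ((γ-1) * ρ r) - γ * p r * ((γ-1) * ρ' r)) / ((γ-1) * ρ r)^2 = 0 := by
    have h := hber r hrm
    rw [hbd.deriv] at h
    have hab : ρ r * u r ≠ 0 := by positivity
    exact (mul_eq_zero.mp h).resolve_left hab
  -- clear denominators in e3
  have e3c : u r * u' r * ((γ-1) * ρ r ^ 2) + γ * (p' r * ρ r - p r * ρ' r) = 0 := by
    have hne : ((γ-1) * ρ r)^2 ≠ 0 := by positivity
    have h2 : γ * p' r * ((γ-1) * ρ r) - γ * p r * ((γ-1) * ρ' r)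
        = -(u r * u' r) * ((γ-1) * ρ r)^2 := by
      have h3 : (γ * p' r * ((γ-1) * ρ r) - γ * p r * ((γ-1) * ρ' r)) / ((γ-1) * ρ r)^2
          = -(u r * u' r) := by linarith [e3]
      field_simp at h3
      linear_combination (γ - 1) * h3
    have h4 : (γ - 1) * (u r * u' r * ((γ-1) * ρ r ^ 2) + γ * (p' r * ρ r - p r * ρ' r))
        = (γ - 1) * 0 := by linear_combination h2
    exact mul_left_cancel₀ (by positivity) h4
  -- key algebraic consequence: ρ² u u' = -γ p ρ'
  have hE : ρ r ^ 2 * (u r * u' r) + γ * p r * ρ' r = 0 := by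
    linear_combination γ * ρ r * e2 - e3c
  -- the master identity
  have key2 : ρ' r * (r^2 * (γ * p r - ρ r * (u r)^2)) = 2 * r * (ρ r)^2 * (u r)^2 := by
    linear_combination (-(ρ r * u r)) * e1 + r^2 * hE
  -- Mach number squared
  have hs : 0 < γ * p r / ρ r := by positivity
  have hM2 : (u r / Real.sqrt (γ * p r / ρ r))^2 = ρ r * (u r)^2 / (γ * p r) := by
    rw [div_pow, Real.sq_sqrt hs.le]
    field_simp
  have hMpos : 0 < u r / Real.sqrt (γ * p r / ρ r) := by
    exact div_pos hb (Real.sqrt_pos.mpr hs)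
  have hM1 : (u r / Real.sqrt (γ * p r / ρ r))^2 < 1 :=
    pow_lt_one₀ hMpos.le (hsub r hrm) two_ne_zero
  have hlt : ρ r * (u r)^2 < γ * p r := by
    rw [hM2, div_lt_one (by positivity)] at hM1
    exact hM1
  have hden : 0 < γ * p r - ρ r * (u r)^2 := by linarith
  have heq : ρ' r = (2 * ρ r / r) *
      ((u r / Real.sqrt (γ * p r / ρ r))^2 / (1 - (u r / Real.sqrt (γ * p r / ρ r))^2)) := by
    rw [hM2]
    have h1 : (1 : ℝ) - ρ r * (u r)^2 / (γ * p r) = (γ * p r - ρ r * (u r)^2) / (γ * p r) := by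
      field_simp
    rw [h1]
    have h2 : ρ r * u r ^ 2 / (γ * p r) / ((γ * p r - ρ r * u r ^ 2) / (γ * p r))
        = ρ r * u r ^ 2 / (γ * p r - ρ r * u r ^ 2) := by
      rw [div_div_div_cancel_right₀]
      positivity
    rw [h2]
    have key1 : ρ' r * (r * (γ * p r - ρ r * (u r)^2)) = 2 * (ρ r)^2 * (u r)^2 := by
      have h5 : r * (ρ' r * (r * (γ * p r - ρ r * (u r)^2))) = r * (2 * (ρ r)^2 * (u r)^2) := by
        linear_combination key2
      exact mul_left_cancel₀ hrpos.ne' h5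
    rw [div_mul_div_comm, eq_div_iff (by positivity)]
    linear_combination key1
  refine ⟨heq, ?_⟩
  rw [heq]
  have h01 : 0 < 1 - (u r / Real.sqrt (γ * p r / ρ r))^2 := by linarith
  positivity
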